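/- Let I = {ℓ, m} with 1 ≤ ℓ < m. Then d(I;z) = (1/m!)·(C(m,ℓ) − 1)·z(z−1)⋯(z−m+1) − (1/ℓ!)·z(z−1)⋯(z−ℓ+1) + 1, and every root z₀ ∈ ℂ of d(I;z) satisfies |z₀ − k| ≤ m for some k ∈ {0,1,…,m−1}; in particular |z₀| ≤ 2m−1, Re(z₀) ≥ −m, and |Im(z₀)| ≤ m. -/

import Mathlib

/-- The descent set of a permutation of `Fin n`, with positions 1-indexed:
`i ∈ descSet n π` iff `1 ≤ i ≤ n-1` and `π_i > π_{i+1}` (1-indexed entries). -/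
def descSet (n : ℕ) (π : Equiv.Perm (Fin n)) : Finset ℕ :=
  (Finset.range n).filter fun i =>
    ∃ h : 0 < i ∧ i < n, π ⟨i, h.2⟩ < π ⟨i - 1, by omega⟩

/-- `dA I n` is the number of permutations in `S_n` with descent set exactly `I`. -/
def dA (I : Finset ℕ) (n : ℕ) : ℕ :=
  (Finset.univ.filter fun π : Equiv.Perm (Fin n) => descSet n π = I).card
section AuxStmt15
open Finset

/-- positions `lo ≤ i < hi` -/
def blk (n lo hi : ℕ) : Finset (Fin n) := univ.filter fun i => lo ≤ (i : ℕ) ∧ (i : ℕ) < hi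

lemma mem_blk {n lo hi : ℕ} {x : Fin n} : x ∈ blk n lo hi ↔ lo ≤ (x : ℕ) ∧ (x : ℕ) < hi := by
  simp [blk]

lemma blk_eq_image (n lo hi : ℕ) (h1 : lo ≤ hi) (h2 : hi ≤ n) :
    blk n lo hi = (univ : Finset (Fin (hi - lo))).image
      (fun i : Fin (hi - lo) => (⟨lo + (i : ℕ), by have := i.isLt; omega⟩ : Fin n)) := by
  ext x
  simp only [mem_blk, mem_image, mem_univ, true_and]
  constructor
  · rintro ⟨ha, hb⟩
    exact ⟨⟨(x : ℕ) - lo, by omega⟩, by ext; simp; omega⟩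
  · rintro ⟨i, rfl⟩
    simp; omega

lemma card_blk (n lo hi : ℕ) (h1 : lo ≤ hi) (h2 : hi ≤ n) :
    (blk n lo hi).card = hi - lo := by
  rw [blk_eq_image n lo hi h1 h2, card_image_of_injective, card_univ, Fintype.card_fin]
  intro i j hij
  have : lo + (i : ℕ) = lo + (j : ℕ) := congrArg Fin.val hij
  exact Fin.ext (by omega)

lemma descSet_subset_iff {n : ℕ} (π : Equiv.Perm (Fin n)) (S : Finset ℕ) :
    descSet n π ⊆ S ↔ ∀ i : ℕ, 0 < i → ∀ hi : i < n, i ∉ S →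
      π ⟨i - 1, by omega⟩ < π ⟨i, hi⟩ := by
  constructor
  · intro hsub i h0 hi hiS
    have hd : i ∉ descSet n π := fun h => hiS (hsub h)
    simp only [descSet, mem_filter, mem_range, not_and, not_exists] at hd
    have h2 := hd hi ⟨h0, hi⟩
    rcases lt_or_eq_of_le (not_lt.mp h2) with h | h
    · exact h
    · exfalso
      have := π.injective h
      have : i - 1 = i := congrArg Fin.val this
      omega
  · intro H i hi
    by_contra hiS
    simp only [descSet, mem_filter, mem_range] at hi
    obtain ⟨hin, ⟨h0, hin'⟩, hlt⟩ := hi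
    exact absurd (H i h0 hin' hiS) (lt_asymm hlt)

/-- chain adjacent increases -/
lemma chain_lt {n : ℕ} (π : Equiv.Perm (Fin n)) (lo hi : ℕ)
    (hstep : ∀ i : ℕ, lo < i → i < hi → ∀ hin : i < n, π ⟨i - 1, by omega⟩ < π ⟨i, hin⟩) :
    ∀ i j : ℕ, ∀ hin : i < n, ∀ hjn : j < n, lo ≤ i → i < j → j < hi →
      π ⟨i, hin⟩ < π ⟨j, hjn⟩ := by
  intro i j
  induction j with
  | zero => intro _ _ _ h; omega
  | succ k ih =>
    intro hin hjn hloi hij hjhi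
    have hk : k < n := by omega
    have hstep' : π ⟨k, hk⟩ < π ⟨k + 1, hjn⟩ := hstep (k + 1) (by omega) hjhi hjn
    rcases Nat.lt_succ_iff_lt_or_eq.mp hij with h | h
    · exact lt_trans (ih hin hk hloi h (by omega)) hstep'
    · subst h; exact hstep'

/-- monotone on a block -/
def MonoBlk {n : ℕ} (π : Equiv.Perm (Fin n)) (lo hi : ℕ) : Prop :=
  ∀ i j : Fin n, i ∈ blk n lo hi → j ∈ blk n lo hi → i < j → π i < π j

lemma descSet_subset_pair_iff {n a b : ℕ} (hab : a ≤ b) (hbn : b ≤ n)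
    (π : Equiv.Perm (Fin n)) :
    descSet n π ⊆ ({a, b} : Finset ℕ) ↔
      MonoBlk π 0 a ∧ MonoBlk π a b ∧ MonoBlk π b n := by
  rw [descSet_subset_iff]
  constructor
  · intro H
    have step : ∀ lo hi : ℕ, hi ≤ n → (∀ i : ℕ, lo < i → i < hi → i ≠ a ∧ i ≠ b) →
        MonoBlk π lo hi := by
      intro lo hi hhin hne i j hi' hj' hij
      rw [mem_blk] at hi' hj'
      have := chain_lt π lo hi
        (fun i h1 h2 hin => H i (by omega) hin (by
          have := hne i h1 h2
          simp only [Finset.mem_insert, Finset.mem_singleton]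
          omega))
        (i : ℕ) (j : ℕ) i.isLt j.isLt hi'.1 hij hj'.2
      simpa using this
    refine ⟨step 0 a (by omega) (fun i h1 h2 => by omega),
            step a b hbn (fun i h1 h2 => by omega),
            step b n le_rfl (fun i h1 h2 => by omega)⟩
  · rintro ⟨H0, H1, H2⟩ i h0 hin hiS
    simp only [Finset.mem_insert, Finset.mem_singleton] at hiS
    push_neg at hiS
    have hadj : (⟨i - 1, by omega⟩ : Fin n) < ⟨i, hin⟩ := by
      simp [Fin.lt_def]; omega
    rcases show i < a ∨ (a < i ∧ i < b) ∨ b < i by omega with h | h | h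
    · exact H0 _ _ (mem_blk.mpr (by simp; omega)) (mem_blk.mpr (by simp; omega)) hadj
    · exact H1 _ _ (mem_blk.mpr (by simp; omega)) (mem_blk.mpr (by simp; omega)) hadj
    · exact H2 _ _ (mem_blk.mpr (by simp; omega)) (mem_blk.mpr (by simp; omega)) hadj

/-- two permutations monotone on a block with the same image on it agree there -/
lemma eq_on_blk {n : ℕ} (π σ : Equiv.Perm (Fin n)) (lo hi : ℕ) (h1 : lo ≤ hi) (h2 : hi ≤ n)
    (hπ : MonoBlk π lo hi) (hσ : MonoBlk σ lo hi)
    (him : (blk n lo hi).image π = (blk n lo hi).image σ) :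
    ∀ x ∈ blk n lo hi, π x = σ x := by
  set k := hi - lo with hk
  set e : Fin k → Fin n := fun i => ⟨lo + (i : ℕ), by have := i.isLt; omega⟩ with he
  have hmemE : ∀ i : Fin k, e i ∈ blk n lo hi := by
    intro i; rw [mem_blk]; have := i.isLt; constructor <;> simp [he] <;> omega
  have hcard : ((blk n lo hi).image π).card = k := by
    rw [card_image_of_injective _ π.injective, card_blk n lo hi h1 h2]
  have heLt : ∀ i j : Fin k, i < j → e i < e j := by
    intro i j hij
    have hij' : (i : ℕ) < (j : ℕ) := hij
    simp only [he, Fin.mk_lt_mk]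
    omega
  have hsmπ : StrictMono (π ∘ e) := fun i j hij => hπ _ _ (hmemE i) (hmemE j) (heLt i j hij)
  have hsmσ : StrictMono (σ ∘ e) := fun i j hij => hσ _ _ (hmemE i) (hmemE j) (heLt i j hij)
  have hπu : (π ∘ e) = ((blk n lo hi).image π).orderEmbOfFin hcard :=
    Finset.orderEmbOfFin_unique hcard
      (fun x => Finset.mem_image_of_mem _ (hmemE x)) hsmπ
  have hσu : (σ ∘ e) = ((blk n lo hi).image π).orderEmbOfFin hcard :=
    Finset.orderEmbOfFin_unique hcard
      (fun x => him ▸ Finset.mem_image_of_mem _ (hmemE x)) hsmσ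
  intro x hx
  rw [mem_blk] at hx
  have hxe : x = e ⟨(x : ℕ) - lo, by omega⟩ := by
    apply Fin.ext; simp [he]; omega
  rw [hxe]
  exact congrFun (hπu.trans hσu.symm) _

lemma blk_disjoint {n lo1 hi1 lo2 hi2 : ℕ} (h : hi1 ≤ lo2) :
    Disjoint (blk n lo1 hi1) (blk n lo2 hi2) := by
  rw [Finset.disjoint_left]
  intro x hx hx'
  rw [mem_blk] at hx hx'
  omega

lemma count_main (n a b : ℕ) (hab : a ≤ b) (hbn : b ≤ n) :
    (Finset.univ.filter fun π : Equiv.Perm (Fin n) =>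
        descSet n π ⊆ ({a, b} : Finset ℕ)).card
      = n.choose a * (n - a).choose (b - a) := by
  classical
  have hfilter : (Finset.univ.filter fun π : Equiv.Perm (Fin n) =>
        descSet n π ⊆ ({a, b} : Finset ℕ))
      = Finset.univ.filter fun π : Equiv.Perm (Fin n) =>
        MonoBlk π 0 a ∧ MonoBlk π a b ∧ MonoBlk π b n := by
    ext π
    simp only [mem_filter, mem_univ, true_and]
    exact descSet_subset_pair_iff hab hbn π
  rw [hfilter]
  set T := (Finset.univ.powersetCard a).sigma
      (fun _A : Finset (Fin n) => ((Finset.univ \ _A).powersetCard (b - a))) with hT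
  have hTcard : T.card = n.choose a * (n - a).choose (b - a) := by
    rw [hT, Finset.card_sigma]
    rw [Finset.sum_congr rfl (fun A hA => ?_), Finset.sum_const, Finset.card_powersetCard,
      card_univ, Fintype.card_fin, smul_eq_mul]
    rw [Finset.card_powersetCard, Finset.card_sdiff_of_subset (subset_univ A), card_univ,
      Fintype.card_fin, (Finset.mem_powersetCard.mp hA).2]
  rw [← hTcard]
  have hcb0 : ∀ π : Equiv.Perm (Fin n), ((blk n 0 a).image π).card = a := by
    intro π
    rw [card_image_of_injective _ π.injective, card_blk n 0 a (by omega) (by omega)]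
    omega
  have hcb1 : ∀ π : Equiv.Perm (Fin n), ((blk n a b).image π).card = b - a := by
    intro π; rw [card_image_of_injective _ π.injective, card_blk n a b hab hbn]
  have hdisj01 : ∀ π : Equiv.Perm (Fin n),
      Disjoint ((blk n 0 a).image π) ((blk n a b).image π) := by
    intro π
    rw [Finset.disjoint_image π.injective]
    exact blk_disjoint le_rfl
  apply Finset.card_bij (fun (π : Equiv.Perm (Fin n)) _ =>
    (⟨(blk n 0 a).image π, (blk n a b).image π⟩ :
      (_A : Finset (Fin n)) × Finset (Fin n)))
  · -- maps into T
    intro π hπ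
    rw [hT, Finset.mem_sigma]
    constructor
    · rw [Finset.mem_powersetCard]
      exact ⟨subset_univ _, hcb0 π⟩
    · rw [Finset.mem_powersetCard]
      refine ⟨Finset.subset_sdiff.mpr ⟨subset_univ _, (hdisj01 π).symm⟩, hcb1 π⟩
  · -- injective
    intro π hπ σ hσ heq
    simp only [mem_filter, mem_univ, true_and] at hπ hσ
    have h0 : (blk n 0 a).image π = (blk n 0 a).image σ :=
      congrArg (fun x : (_A : Finset (Fin n)) × Finset (Fin n) => x.1) heq
    have h1 : (blk n a b).image π = (blk n a b).image σ :=
      congrArg (fun x : (_A : Finset (Fin n)) × Finset (Fin n) => x.2) heq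
    have himg2 : ∀ τ : Equiv.Perm (Fin n), (blk n b n).image τ
        = Finset.univ \ ((blk n 0 a).image τ ∪ (blk n a b).image τ) := by
      intro τ
      apply Finset.eq_of_subset_of_card_le
      · intro x hx
        rw [Finset.mem_sdiff]
        refine ⟨mem_univ _, ?_⟩
        rw [Finset.mem_union]
        rintro (hmem | hmem)
        · obtain ⟨y, hy, rfl⟩ := Finset.mem_image.mp hx
          obtain ⟨y', hy', hyy⟩ := Finset.mem_image.mp hmem
          have := τ.injective hyy
          subst this
          rw [mem_blk] at hy hy'
          omega
        · obtain ⟨y, hy, rfl⟩ := Finset.mem_image.mp hx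
          obtain ⟨y', hy', hyy⟩ := Finset.mem_image.mp hmem
          have := τ.injective hyy
          subst this
          rw [mem_blk] at hy hy'
          omega
      · rw [Finset.card_sdiff_of_subset (subset_univ _), card_univ, Fintype.card_fin,
          Finset.card_union_of_disjoint (hdisj01 τ), hcb0 τ, hcb1 τ,
          card_image_of_injective _ τ.injective, card_blk n b n hbn le_rfl]
        omega
    have h2 : (blk n b n).image π = (blk n b n).image σ := by
      rw [himg2 π, himg2 σ, h0, h1]
    apply Equiv.ext
    intro x
    rcases show (x : ℕ) < a ∨ (a ≤ (x : ℕ) ∧ (x : ℕ) < b) ∨ b ≤ (x : ℕ) by omega with h | h | h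
    · exact eq_on_blk π σ 0 a (by omega) (by omega) hπ.1 hσ.1 h0 x
        (mem_blk.mpr ⟨by omega, h⟩)
    · exact eq_on_blk π σ a b hab hbn hπ.2.1 hσ.2.1 h1 x (mem_blk.mpr h)
    · exact eq_on_blk π σ b n hbn le_rfl hπ.2.2 hσ.2.2 h2 x
        (mem_blk.mpr ⟨h, x.isLt⟩)
  · -- surjective
    rintro ⟨A, B⟩ hAB
    rw [hT, Finset.mem_sigma, Finset.mem_powersetCard, Finset.mem_powersetCard] at hAB
    obtain ⟨⟨-, hA⟩, hBsub, hB⟩ := hAB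
    have hABdisj : Disjoint A B := by
      have := Finset.subset_sdiff.mp hBsub
      exact this.2.symm
    set Cs : Finset (Fin n) := ((Finset.univ \ A) \ B) with hCs
    have hC : Cs.card = n - b := by
      rw [hCs, Finset.card_sdiff_of_subset, Finset.card_sdiff_of_subset (subset_univ A), card_univ,
        Fintype.card_fin, hA, hB]
      · omega
      · exact hBsub
    have hACdisj : Disjoint A Cs := by
      rw [hCs, Finset.disjoint_left]
      intro x hx hx'
      rw [Finset.mem_sdiff, Finset.mem_sdiff] at hx'
      exact hx'.1.2 hx
    have hBCdisj : Disjoint B Cs := by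
      rw [hCs, Finset.disjoint_left]
      intro x hx hx'
      rw [Finset.mem_sdiff] at hx'
      exact hx'.2 hx
    set f : Fin n → Fin n := fun i =>
      if h : (i : ℕ) < a then A.orderEmbOfFin hA ⟨(i : ℕ), h⟩
      else if h' : (i : ℕ) < b then B.orderEmbOfFin hB ⟨(i : ℕ) - a, by omega⟩
      else Cs.orderEmbOfFin hC ⟨(i : ℕ) - b, by have := i.isLt; omega⟩ with hf
    have hfA : ∀ i : Fin n, (i : ℕ) < a → f i ∈ A := by
      intro i h
      rw [hf]; simp only [dif_pos h]; exact Finset.orderEmbOfFin_mem _ _ _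
    have hfB : ∀ i : Fin n, a ≤ (i : ℕ) → (i : ℕ) < b → f i ∈ B := by
      intro i h h'
      rw [hf]; simp only [dif_neg (by omega : ¬ (i : ℕ) < a), dif_pos h']
      exact Finset.orderEmbOfFin_mem _ _ _
    have hfC : ∀ i : Fin n, b ≤ (i : ℕ) → f i ∈ Cs := by
      intro i h
      rw [hf]; simp only [dif_neg (by omega : ¬ (i : ℕ) < a),
        dif_neg (by omega : ¬ (i : ℕ) < b)]
      exact Finset.orderEmbOfFin_mem _ _ _
    have hinj : Function.Injective f := by
      intro i j hij
      have tri : ∀ x : Fin n, ((x:ℕ) < a ∧ f x ∈ A) ∨ (a ≤ (x:ℕ) ∧ (x:ℕ) < b ∧ f x ∈ B)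
          ∨ (b ≤ (x:ℕ) ∧ f x ∈ Cs) := by
        intro x
        rcases show (x:ℕ) < a ∨ (a ≤ (x:ℕ) ∧ (x:ℕ) < b) ∨ b ≤ (x:ℕ) by omega with h | h | h
        · exact Or.inl ⟨h, hfA x h⟩
        · exact Or.inr (Or.inl ⟨h.1, h.2, hfB x h.1 h.2⟩)
        · exact Or.inr (Or.inr ⟨h, hfC x h⟩)
      rcases tri i with ⟨hi1, hi2⟩ | ⟨hi1, hi1', hi2⟩ | ⟨hi1, hi2⟩ <;>
        rcases tri j with ⟨hj1, hj2⟩ | ⟨hj1, hj1', hj2⟩ | ⟨hj1, hj2⟩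
      · -- both in A
        rw [hf] at hij
        simp only [dif_pos hi1, dif_pos hj1] at hij
        have := (A.orderEmbOfFin hA).injective hij
        simp only [Fin.mk.injEq] at this
        exact Fin.ext this
      · exact absurd hj2 (Finset.disjoint_left.mp hABdisj (hij ▸ hi2))
      · exact absurd hj2 (Finset.disjoint_left.mp hACdisj (hij ▸ hi2))
      · exact absurd (hij ▸ hi2) (Finset.disjoint_left.mp hABdisj hj2)
      · rw [hf] at hij
        simp only [dif_neg (by omega : ¬ (i : ℕ) < a), dif_pos hi1',
          dif_neg (by omega : ¬ (j : ℕ) < a), dif_pos hj1'] at hij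
        have := (B.orderEmbOfFin hB).injective hij
        simp only [Fin.mk.injEq] at this
        exact Fin.ext (by omega)
      · exact absurd hj2 (Finset.disjoint_left.mp hBCdisj (hij ▸ hi2))
      · exact absurd (hij ▸ hi2) (Finset.disjoint_left.mp hACdisj hj2)
      · exact absurd (hij ▸ hi2) (Finset.disjoint_left.mp hBCdisj hj2)
      · rw [hf] at hij
        simp only [dif_neg (by omega : ¬ (i : ℕ) < a), dif_neg (by omega : ¬ (i : ℕ) < b),
          dif_neg (by omega : ¬ (j : ℕ) < a), dif_neg (by omega : ¬ (j : ℕ) < b)] at hij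
        have := (Cs.orderEmbOfFin hC).injective hij
        simp only [Fin.mk.injEq] at this
        exact Fin.ext (by omega)
    set π : Equiv.Perm (Fin n) := Equiv.ofBijective f
      (Finite.injective_iff_bijective.mp hinj) with hπdef
    have hπf : ∀ i, π i = f i := fun i => rfl
    have hmono : MonoBlk π 0 a ∧ MonoBlk π a b ∧ MonoBlk π b n := by
      refine ⟨?_, ?_, ?_⟩ <;> intro i j hi hj hij <;> rw [mem_blk] at hi hj <;>
        rw [hπf, hπf, hf] <;> have hij' : (i : ℕ) < (j : ℕ) := hij
      · simp only [dif_pos hi.2, dif_pos hj.2]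
        exact (A.orderEmbOfFin hA).strictMono (Fin.mk_lt_mk.mpr (by omega))
      · simp only [dif_neg (by omega : ¬ (i : ℕ) < a), dif_pos hi.2,
          dif_neg (by omega : ¬ (j : ℕ) < a), dif_pos hj.2]
        exact (B.orderEmbOfFin hB).strictMono (Fin.mk_lt_mk.mpr (by omega))
      · simp only [dif_neg (by omega : ¬ (i : ℕ) < a), dif_neg (by omega : ¬ (i : ℕ) < b),
          dif_neg (by omega : ¬ (j : ℕ) < a), dif_neg (by omega : ¬ (j : ℕ) < b)]
        exact (Cs.orderEmbOfFin hC).strictMono (Fin.mk_lt_mk.mpr (by omega))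
    refine ⟨π, by simp only [mem_filter, mem_univ, true_and]; exact hmono, ?_⟩
    have himA : (blk n 0 a).image π = A := by
      apply Finset.eq_of_subset_of_card_le
      · intro x hx
        obtain ⟨y, hy, rfl⟩ := Finset.mem_image.mp hx
        rw [mem_blk] at hy
        rw [hπf]
        exact hfA y hy.2
      · rw [hcb0 π, hA]
    have himB : (blk n a b).image π = B := by
      apply Finset.eq_of_subset_of_card_le
      · intro x hx
        obtain ⟨y, hy, rfl⟩ := Finset.mem_image.mp hx
        rw [mem_blk] at hy
        rw [hπf]
        exact hfB y hy.1 hy.2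
      · rw [hcb1 π, hB]
    exact Sigma.ext himA (heq_of_eq himB)

lemma zero_not_mem_descSet {n : ℕ} (π : Equiv.Perm (Fin n)) : 0 ∉ descSet n π := by
  simp [descSet]

lemma count_le_singleton (n c : ℕ) (hc : c ≤ n) :
    (Finset.univ.filter fun π : Equiv.Perm (Fin n) => descSet n π = (∅ : Finset ℕ)).card
      + (Finset.univ.filter fun π : Equiv.Perm (Fin n) => descSet n π = ({c} : Finset ℕ)).card
      = n.choose c := by
  have h := count_main n c c le_rfl hc
  rw [Nat.sub_self, Nat.choose_zero_right, mul_one] at h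
  rw [← h]
  have hsplit : (Finset.univ.filter fun π : Equiv.Perm (Fin n) =>
        descSet n π ⊆ ({c, c} : Finset ℕ))
      = (Finset.univ.filter fun π : Equiv.Perm (Fin n) => descSet n π = (∅ : Finset ℕ))
        ∪ (Finset.univ.filter fun π : Equiv.Perm (Fin n) =>
            descSet n π = ({c} : Finset ℕ)) := by
    ext π
    simp only [Finset.mem_filter, Finset.mem_univ, true_and, Finset.mem_union]
    rw [show ({c, c} : Finset ℕ) = {c} by simp, Finset.subset_singleton_iff]
  rw [hsplit, Finset.card_union_of_disjoint]
  rw [Finset.disjoint_left]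
  intro π hπ hπ'
  simp only [Finset.mem_filter, Finset.mem_univ, true_and] at hπ hπ'
  rw [hπ] at hπ'
  exact (Finset.singleton_ne_empty c) hπ'.symm

lemma count_empty (n : ℕ) :
    (Finset.univ.filter fun π : Equiv.Perm (Fin n) =>
      descSet n π = (∅ : Finset ℕ)).card = 1 := by
  have h := count_main n 0 0 le_rfl (Nat.zero_le n)
  simp only [Nat.sub_self, Nat.sub_zero, Nat.choose_zero_right, one_mul] at h
  rw [← h]
  congr 1
  ext π
  simp only [Finset.mem_filter, Finset.mem_univ, true_and]
  rw [show ({0, 0} : Finset ℕ) = {0} by simp, Finset.subset_singleton_iff]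
  constructor
  · exact Or.inl
  · rintro (h' | h')
    · exact h'
    · exact absurd (h' ▸ Finset.mem_singleton_self 0) (zero_not_mem_descSet π)

lemma dA_count (ℓ m n : ℕ) (h1 : 1 ≤ ℓ) (h2 : ℓ < m) (hn : m < n) :
    dA {ℓ, m} n + n.choose ℓ + n.choose m
      = n.choose ℓ * (n - ℓ).choose (m - ℓ) + 1 := by
  have hB := count_main n ℓ m (le_of_lt h2) (le_of_lt hn)
  have hsplit : (Finset.univ.filter fun π : Equiv.Perm (Fin n) =>
        descSet n π ⊆ ({ℓ, m} : Finset ℕ))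
      = ((Finset.univ.filter fun π : Equiv.Perm (Fin n) => descSet n π = (∅ : Finset ℕ))
          ∪ (Finset.univ.filter fun π : Equiv.Perm (Fin n) =>
              descSet n π = ({ℓ} : Finset ℕ)))
        ∪ ((Finset.univ.filter fun π : Equiv.Perm (Fin n) =>
              descSet n π = ({m} : Finset ℕ))
          ∪ (Finset.univ.filter fun π : Equiv.Perm (Fin n) =>
              descSet n π = ({ℓ, m} : Finset ℕ))) := by
    ext π
    simp only [Finset.mem_filter, Finset.mem_univ, true_and, Finset.mem_union]
    constructor
    · intro h
      by_cases hl : ℓ ∈ descSet n π <;> by_cases hm : m ∈ descSet n π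
      · refine Or.inr (Or.inr (Finset.Subset.antisymm h ?_))
        intro x hx
        simp only [Finset.mem_insert, Finset.mem_singleton] at hx
        rcases hx with rfl | rfl <;> assumption
      · refine Or.inl (Or.inr (Finset.Subset.antisymm ?_ ?_))
        · intro x hx
          have hx' := h hx
          simp only [Finset.mem_insert, Finset.mem_singleton] at hx' ⊢
          rcases hx' with rfl | rfl
          · rfl
          · exact absurd hx hm
        · exact Finset.singleton_subset_iff.mpr hl
      · refine Or.inr (Or.inl (Finset.Subset.antisymm ?_ ?_))
        · intro x hx
          have hx' := h hx
          simp only [Finset.mem_insert, Finset.mem_singleton] at hx' ⊢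
          rcases hx' with rfl | rfl
          · exact absurd hx hl
          · rfl
        · exact Finset.singleton_subset_iff.mpr hm
      · refine Or.inl (Or.inl (Finset.eq_empty_iff_forall_notMem.mpr ?_))
        intro x hx
        have hx' := h hx
        simp only [Finset.mem_insert, Finset.mem_singleton] at hx'
        rcases hx' with rfl | rfl
        · exact hl hx
        · exact hm hx
    · rintro ((h | h) | (h | h)) <;> rw [h]
      · exact Finset.empty_subset _
      · exact Finset.singleton_subset_iff.mpr (Finset.mem_insert_self ℓ {m})
      · exact Finset.singleton_subset_iff.mpr
          (Finset.mem_insert_of_mem (Finset.mem_singleton_self m))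
  have hdisj : ∀ (S T : Finset ℕ), S ≠ T →
      Disjoint (Finset.univ.filter fun π : Equiv.Perm (Fin n) => descSet n π = S)
        (Finset.univ.filter fun π : Equiv.Perm (Fin n) => descSet n π = T) := by
    intro S T hST
    rw [Finset.disjoint_left]
    intro π hπ hπ'
    simp only [Finset.mem_filter, Finset.mem_univ, true_and] at hπ hπ'
    exact hST (hπ ▸ hπ')
  have hne1 : (∅ : Finset ℕ) ≠ {ℓ} := (Finset.singleton_ne_empty ℓ).symm
  have hne2 : (∅ : Finset ℕ) ≠ {m} := (Finset.singleton_ne_empty m).symm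
  have hne3 : (∅ : Finset ℕ) ≠ {ℓ, m} := by
    intro h
    exact absurd (h ▸ Finset.mem_insert_self ℓ {m}) (Finset.notMem_empty ℓ)
  have hne4 : ({ℓ} : Finset ℕ) ≠ {m} := by
    intro h
    have := h ▸ Finset.mem_singleton_self ℓ
    rw [Finset.mem_singleton] at this
    omega
  have hne5 : ({ℓ} : Finset ℕ) ≠ {ℓ, m} := by
    intro h
    have := h.symm ▸ Finset.mem_insert_of_mem (Finset.mem_singleton_self m)
    rw [Finset.mem_singleton] at this
    omega
  have hne6 : ({m} : Finset ℕ) ≠ {ℓ, m} := by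
    intro h
    have := h.symm ▸ Finset.mem_insert_self ℓ {m}
    rw [Finset.mem_singleton] at this
    omega
  rw [hsplit, Finset.card_union_of_disjoint
        (Finset.disjoint_union_left.mpr
          ⟨Finset.disjoint_union_right.mpr ⟨hdisj _ _ hne2, hdisj _ _ hne3⟩,
           Finset.disjoint_union_right.mpr ⟨hdisj _ _ hne4, hdisj _ _ hne5⟩⟩),
      Finset.card_union_of_disjoint (hdisj _ _ hne1),
      Finset.card_union_of_disjoint (hdisj _ _ hne6)] at hB
  have hEmp := count_empty n
  have hSl := count_le_singleton n ℓ (by omega)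
  have hSm := count_le_singleton n m (by omega)
  have hdA : dA {ℓ, m} n = (Finset.univ.filter fun π : Equiv.Perm (Fin n) =>
      descSet n π = ({ℓ, m} : Finset ℕ)).card := rfl
  omega

noncomputable def qpoly (ℓ m : ℕ) : Polynomial ℂ :=
  Polynomial.C ((1 / (m.factorial : ℂ)) * ((m.choose ℓ : ℂ) - 1)) *
      (∏ j ∈ Finset.range m, (Polynomial.X - Polynomial.C (j : ℂ)))
    - Polynomial.C (1 / (ℓ.factorial : ℂ)) *
      (∏ j ∈ Finset.range ℓ, (Polynomial.X - Polynomial.C (j : ℂ))) + 1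

lemma qpoly_eval (ℓ m : ℕ) (z : ℂ) :
    (qpoly ℓ m).eval z = (1 / (m.factorial : ℂ)) * ((m.choose ℓ : ℂ) - 1) *
          (∏ j ∈ Finset.range m, (z - j))
        - (1 / (ℓ.factorial : ℂ)) * (∏ j ∈ Finset.range ℓ, (z - j)) + 1 := by
  simp [qpoly, Polynomial.eval_prod]

lemma prod_desc (n k : ℕ) (hk : k ≤ n) :
    (∏ j ∈ Finset.range k, ((n : ℂ) - j)) = (k.factorial : ℂ) * (n.choose k : ℂ) := by
  have h : (∏ j ∈ Finset.range k, ((n : ℂ) - j)) = ((n.descFactorial k : ℕ) : ℂ) := by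
    rw [Nat.descFactorial_eq_prod_range, Nat.cast_prod]
    apply Finset.prod_congr rfl
    intro i hi
    rw [Finset.mem_range] at hi
    rw [Nat.cast_sub (by omega)]
  rw [h, Nat.descFactorial_eq_factorial_mul_choose, Nat.cast_mul]

lemma qpoly_eval_nat (ℓ m n : ℕ) (h1 : 1 ≤ ℓ) (h2 : ℓ < m) (hn : m < n) :
    (qpoly ℓ m).eval ((n : ℕ) : ℂ) = (dA {ℓ, m} n : ℂ) := by
  rw [qpoly_eval, prod_desc n m (by omega), prod_desc n ℓ (by omega)]
  have hmf : (m.factorial : ℂ) ≠ 0 := Nat.cast_ne_zero.mpr m.factorial_ne_zero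
  have hlf : (ℓ.factorial : ℂ) ≠ 0 := Nat.cast_ne_zero.mpr ℓ.factorial_ne_zero
  have hcount := dA_count ℓ m n h1 h2 hn
  have hchoose : n.choose m * m.choose ℓ = n.choose ℓ * (n - ℓ).choose (m - ℓ) :=
    Nat.choose_mul (by omega)
  have hc1 : ((dA {ℓ, m} n : ℕ) : ℂ) + (n.choose ℓ : ℂ) + (n.choose m : ℂ)
      = (n.choose ℓ : ℂ) * ((n - ℓ).choose (m - ℓ) : ℂ) + 1 := by exact_mod_cast hcount
  have hc2 : (n.choose m : ℂ) * (m.choose ℓ : ℂ)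
      = (n.choose ℓ : ℂ) * ((n - ℓ).choose (m - ℓ) : ℂ) := by exact_mod_cast hchoose
  have e1 : (1 / (m.factorial : ℂ)) * ((m.choose ℓ : ℂ) - 1)
        * ((m.factorial : ℂ) * (n.choose m : ℂ))
      = ((m.choose ℓ : ℂ) - 1) * (n.choose m : ℂ) := by
    field_simp
  have e2 : (1 / (ℓ.factorial : ℂ)) * ((ℓ.factorial : ℂ) * (n.choose ℓ : ℂ))
      = (n.choose ℓ : ℂ) := by
    field_simp
  rw [e1, e2]
  linear_combination hc2 - hc1

lemma p_eq_qpoly (ℓ m : ℕ) (h1 : 1 ≤ ℓ) (h2 : ℓ < m) (p : Polynomial ℂ)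
    (hp : ∀ n : ℕ, m < n → p.eval (n : ℂ) = dA {ℓ, m} n) : p = qpoly ℓ m := by
  apply Polynomial.eq_of_infinite_eval_eq
  apply Set.infinite_of_injective_forall_mem (f := fun k : ℕ => ((m + 1 + k : ℕ) : ℂ))
  · intro x y hxy
    have : (m + 1 + x : ℕ) = (m + 1 + y : ℕ) := Nat.cast_injective hxy
    omega
  · intro k
    simp only [Set.mem_setOf_eq]
    rw [hp _ (by omega), qpoly_eval_nat ℓ m _ h1 h2 (by omega)]

lemma choose_lower (m ℓ : ℕ) (h1 : 1 ≤ ℓ) (h2 : ℓ < m) : m ≤ m.choose ℓ := by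
  induction m with
  | zero => omega
  | succ k ih =>
    rcases Nat.lt_or_ge ℓ k with h | h
    · obtain ⟨j, rfl⟩ : ∃ j, ℓ = j + 1 := ⟨ℓ - 1, by omega⟩
      rw [Nat.choose_succ_succ]
      have hpos : 0 < k.choose j := Nat.choose_pos (by omega)
      have := ih h
      simp only [Nat.succ_eq_add_one] at *
      omega
    · have hlk : ℓ = k := by omega
      subst hlk
      rw [Nat.choose_succ_self_right]

lemma fact_le_fact_mul_pow (k d : ℕ) : (k + d).factorial ≤ k.factorial * (k + d) ^ d := by
  induction d with
  | zero => simp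
  | succ e ih =>
    have h1 : (k + (e + 1)).factorial = (k + e + 1) * (k + e).factorial := rfl
    rw [h1]
    calc (k + e + 1) * (k + e).factorial
        ≤ (k + e + 1) * (k.factorial * (k + e) ^ e) := Nat.mul_le_mul_left _ ih
      _ ≤ (k + e + 1) * (k.factorial * (k + e + 1) ^ e) :=
          Nat.mul_le_mul_left _ (Nat.mul_le_mul_left _ (Nat.pow_le_pow_left (by omega) e))
      _ = k.factorial * (k + (e + 1)) ^ (e + 1) := by ring

lemma abs_add_lower (x y : ℂ) : ‖x‖ - ‖y‖ ≤ ‖x + y‖ := by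
  have h := norm_add_le (x + y) (-y)
  rw [add_neg_cancel_right, norm_neg] at h
  linarith

theorem stmt_15' (ℓ m : ℕ) (h1 : 1 ≤ ℓ) (h2 : ℓ < m)
    (p : Polynomial ℂ)
    (hp : ∀ n : ℕ, m < n → p.eval (n : ℂ) = dA {ℓ, m} n) :
    (∀ z : ℂ,
      p.eval z = (1 / (m.factorial : ℂ)) * ((m.choose ℓ : ℂ) - 1) *
          (∏ j ∈ Finset.range m, (z - j))
        - (1 / (ℓ.factorial : ℂ)) * (∏ j ∈ Finset.range ℓ, (z - j)) + 1) ∧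
    (∀ z₀ : ℂ, p.eval z₀ = 0 →
      (∃ k ∈ Finset.range m, ‖z₀ - k‖ ≤ m) ∧
      ‖z₀‖ ≤ 2 * m - 1 ∧ -(m : ℝ) ≤ z₀.re ∧ |z₀.im| ≤ m) := by
  have hq := p_eq_qpoly ℓ m h1 h2 p hp
  have hEval : ∀ z : ℂ,
      p.eval z = (1 / (m.factorial : ℂ)) * ((m.choose ℓ : ℂ) - 1) *
          (∏ j ∈ Finset.range m, (z - j))
        - (1 / (ℓ.factorial : ℂ)) * (∏ j ∈ Finset.range ℓ, (z - j)) + 1 := by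
    intro z
    rw [hq, qpoly_eval]
  refine ⟨hEval, ?_⟩
  intro z₀ hroot
  have h0 : (0 : ℂ) = (1 / (m.factorial : ℂ)) * ((m.choose ℓ : ℂ) - 1) *
          (∏ j ∈ Finset.range m, (z₀ - j))
        - (1 / (ℓ.factorial : ℂ)) * (∏ j ∈ Finset.range ℓ, (z₀ - j)) + 1 := by
    rw [← hroot]
    exact hEval z₀
  have hkey : ∃ k ∈ Finset.range m, ‖z₀ - k‖ ≤ m := by
    by_contra hcon
    push_neg at hcon
    by_cases hm3 : 3 ≤ m
    · -- main case
      set Pl := ∏ j ∈ Finset.range ℓ, (z₀ - (j : ℂ)) with hPl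
      set Pm := ∏ j ∈ Finset.range m, (z₀ - (j : ℂ)) with hPm
      have hmf : (m.factorial : ℂ) ≠ 0 := Nat.cast_ne_zero.mpr m.factorial_ne_zero
      have hlf : (ℓ.factorial : ℂ) ≠ 0 := Nat.cast_ne_zero.mpr ℓ.factorial_ne_zero
      have hch3 : 3 ≤ m.choose ℓ := le_trans hm3 (choose_lower m ℓ h1 h2)
      have hE : (ℓ.factorial : ℂ) * ((m.choose ℓ : ℂ) - 1) * Pm
            + (ℓ.factorial : ℂ) * (m.factorial : ℂ)
          = (m.factorial : ℂ) * Pl := by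
        field_simp at h0
        linear_combination -h0
      set r := ‖Pl‖ with hr_def
      set s := ‖Pm‖ with hs_def
      set L := (ℓ.factorial : ℝ) with hL
      set M := (m.factorial : ℝ) with hM
      set c := ((m.choose ℓ : ℝ) - 1) with hc
      have hc2 : (2 : ℝ) ≤ c := by
        have h3 : (3 : ℝ) ≤ (m.choose ℓ : ℝ) := by exact_mod_cast hch3
        rw [hc]; linarith
      have habsC : ‖((m.choose ℓ : ℂ) - 1)‖ = c := by
        rw [show ((m.choose ℓ : ℂ) - 1) = (((m.choose ℓ : ℝ) - 1 : ℝ) : ℂ) by push_cast; ring,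
          Complex.norm_real, Real.norm_eq_abs, abs_of_nonneg (by linarith)]
      have hLB : L * c * s - L * M ≤ M * r := by
        have h := abs_add_lower ((ℓ.factorial : ℂ) * ((m.choose ℓ : ℂ) - 1) * Pm)
          ((ℓ.factorial : ℂ) * (m.factorial : ℂ))
        rw [hE] at h
        simpa [norm_mul, Complex.norm_natCast, habsC] using h
      have hmpos : (0 : ℝ) < m := by
        have : (0 : ℕ) < m := by omega
        exact_mod_cast this
      have hr : (m : ℝ) ^ ℓ < r := by
        rw [hr_def, hPl, norm_prod]
        calc (m : ℝ) ^ ℓ = ∏ _j ∈ Finset.range ℓ, (m : ℝ) := by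
              rw [Finset.prod_const, Finset.card_range]
          _ < ∏ j ∈ Finset.range ℓ, ‖z₀ - (j : ℂ)‖ := by
              apply Finset.prod_lt_prod_of_nonempty (fun i _ => hmpos)
              · intro i hi
                exact hcon i (Finset.mem_range.mpr (by
                  have := Finset.mem_range.mp hi; omega))
              · exact Finset.nonempty_range_iff.mpr (by omega)
      have hrpos : 0 < r := lt_trans (by positivity) hr
      have hsplitP : Pm = Pl * ∏ j ∈ Finset.range (m - ℓ), (z₀ - ((ℓ + j : ℕ) : ℂ)) := by
        have h := Finset.prod_range_add (fun j : ℕ => z₀ - (j : ℂ)) ℓ (m - ℓ)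
        rw [show ℓ + (m - ℓ) = m by omega] at h
        rw [hPm, hPl, h]
      have hprod2 : (m : ℝ) ^ (m - ℓ)
          < ‖∏ j ∈ Finset.range (m - ℓ), (z₀ - ((ℓ + j : ℕ) : ℂ))‖ := by
        rw [norm_prod]
        calc (m : ℝ) ^ (m - ℓ) = ∏ _j ∈ Finset.range (m - ℓ), (m : ℝ) := by
              rw [Finset.prod_const, Finset.card_range]
          _ < _ := by
              apply Finset.prod_lt_prod_of_nonempty (fun i _ => hmpos)
              · intro i hi
                exact hcon (ℓ + i) (Finset.mem_range.mpr (by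
                  have := Finset.mem_range.mp hi; omega))
              · exact Finset.nonempty_range_iff.mpr (by omega)
      have hs : (m : ℝ) ^ (m - ℓ) * r < s := by
        have hseq : s = r * ‖
            (∏ j ∈ Finset.range (m - ℓ), (z₀ - ((ℓ + j : ℕ) : ℂ)))‖ := by
          rw [hs_def, hsplitP, norm_mul, ← hr_def]
        rw [hseq, mul_comm ((m : ℝ) ^ (m - ℓ)) r]
        exact (mul_lt_mul_iff_right₀ hrpos).mpr hprod2
      have hfact : M ≤ L * (m : ℝ) ^ (m - ℓ) := by
        have h := fact_le_fact_mul_pow ℓ (m - ℓ)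
        rw [show ℓ + (m - ℓ) = m by omega] at h
        rw [hM, hL]
        calc (m.factorial : ℝ) ≤ ((ℓ.factorial * m ^ (m - ℓ) : ℕ) : ℝ) := by exact_mod_cast h
          _ = _ := by push_cast; ring
      have hfl : L ≤ (m : ℝ) ^ ℓ := by
        have ha : ℓ.factorial ≤ ℓ ^ ℓ := Nat.factorial_le_pow ℓ
        have hb : ℓ ^ ℓ ≤ m ^ ℓ := Nat.pow_le_pow_left (by omega) ℓ
        rw [hL]
        calc (ℓ.factorial : ℝ) ≤ ((m ^ ℓ : ℕ) : ℝ) := by exact_mod_cast le_trans ha hb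
          _ = _ := by push_cast; ring
      have hLpos : (0 : ℝ) < L := by
        rw [hL]; exact_mod_cast ℓ.factorial_pos
      have hMpos : (0 : ℝ) < M := by
        rw [hM]; exact_mod_cast m.factorial_pos
      have k1 : L * c * ((m : ℝ) ^ (m - ℓ) * r) < L * c * s := by
        apply mul_lt_mul_of_pos_left hs
        positivity
      have k2 : c * r * M ≤ c * r * (L * (m : ℝ) ^ (m - ℓ)) :=
        mul_le_mul_of_nonneg_left hfact (by positivity)
      have e : L * c * ((m : ℝ) ^ (m - ℓ) * r) = c * r * (L * (m : ℝ) ^ (m - ℓ)) := by ring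
      have k4 : 2 * (r * M) ≤ c * (r * M) :=
        mul_le_mul_of_nonneg_right hc2 (by positivity)
      have k5 : r * M < L * M := by nlinarith [k1, k2, hLB, e, k4]
      have k6 : r < L := lt_of_mul_lt_mul_right (by linarith) (le_of_lt hMpos)
      linarith
    · -- m = 2, ℓ = 1
      have hm2 : m = 2 := by omega
      have hl1 : ℓ = 1 := by omega
      subst hm2 hl1
      have e2 : (∏ j ∈ Finset.range 2, (z₀ - (j : ℂ))) = z₀ * (z₀ - 1) := by
        rw [Finset.prod_range_succ, Finset.prod_range_one]
        norm_num
      have e1 : (∏ j ∈ Finset.range 1, (z₀ - (j : ℂ))) = z₀ := by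
        rw [Finset.prod_range_one]
        norm_num
      rw [e2, e1] at h0
      norm_num [Nat.factorial] at h0
      have hfac : (z₀ - 1) * (z₀ - 2) = 0 := by linear_combination (-2 : ℂ) * h0
      rcases mul_eq_zero.mp hfac with h | h
      · have hz : z₀ = 1 := by linear_combination h
        have h1' := hcon 1 (by norm_num)
        rw [hz] at h1'
        norm_num at h1'
      · have hz : z₀ = 2 := by linear_combination h
        have h0' := hcon 0 (by norm_num)
        rw [hz] at h0'
        norm_num at h0'
  obtain ⟨k, hk, hdist⟩ := hkey
  have hkm : k < m := Finset.mem_range.mp hk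
  have hkR : (k : ℝ) ≤ (m : ℝ) - 1 := by
    have : (k : ℝ) + 1 ≤ m := by exact_mod_cast hkm
    linarith
  have hkR0 : (0 : ℝ) ≤ (k : ℝ) := Nat.cast_nonneg k
  refine ⟨⟨k, hk, hdist⟩, ?_, ?_, ?_⟩
  · -- |z₀| ≤ 2m - 1
    have h5 : ‖z₀‖ ≤ ‖z₀ - k‖ + ‖((k : ℕ) : ℂ)‖ := by
      calc ‖z₀‖ = ‖(z₀ - k) + k‖ := by rw [sub_add_cancel]
        _ ≤ _ := norm_add_le _ _
    rw [Complex.norm_natCast] at h5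
    linarith
  · -- re
    have h6 : |(z₀ - k).re| ≤ (m : ℝ) := le_trans (Complex.abs_re_le_norm _) hdist
    have h7 : (z₀ - (k : ℂ)).re = z₀.re - k := by simp
    rw [h7] at h6
    have := abs_le.mp h6
    linarith [this.1]
  · -- im
    have h6 : |(z₀ - k).im| ≤ (m : ℝ) := le_trans (Complex.abs_im_le_norm _) hdist
    have h7 : (z₀ - (k : ℂ)).im = z₀.im := by simp
    rw [h7] at h6
    exact h6

end AuxStmt15

/-- Theorem 4.8: for `I = {ℓ, m}` with `1 ≤ ℓ < m`, the descent polynomial is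
`(1/m!)(C(m,ℓ)−1) z↓_m − (1/ℓ!) z↓_ℓ + 1`, and every root lies in a disc of
radius `m` centered at some `k ∈ {0,…,m−1}`; in particular `|z₀| ≤ 2m−1`,
`Re(z₀) ≥ −m` and `|Im(z₀)| ≤ m`. -/
theorem stmt_15 (ℓ m : ℕ) (h1 : 1 ≤ ℓ) (h2 : ℓ < m)
    (p : Polynomial ℂ)
    (hp : ∀ n : ℕ, m < n → p.eval (n : ℂ) = dA {ℓ, m} n) :
    (∀ z : ℂ,
      p.eval z = (1 / (m.factorial : ℂ)) * ((m.choose ℓ : ℂ) - 1) *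
          (∏ j ∈ Finset.range m, (z - j))
        - (1 / (ℓ.factorial : ℂ)) * (∏ j ∈ Finset.range ℓ, (z - j)) + 1) ∧
    (∀ z₀ : ℂ, p.eval z₀ = 0 →
      (∃ k ∈ Finset.range m, ‖z₀ - k‖ ≤ m) ∧
      ‖z₀‖ ≤ 2 * m - 1 ∧ -(m : ℝ) ≤ z₀.re ∧ |z₀.im| ≤ m) := by
  exact stmt_15' ℓ m h1 h2 p hp
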